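/- In a decomposable and smooth arithmetic circuit, for a *-node n with children c_1, …, c_k, the complete subcircuits rooted at n correspond bijectively to tuples of complete subcircuits rooted at its children, the term of the combined subcircuit is the disjoint union of the children's terms, and its coefficient is the product of the children's coefficients. -/
import Mathlib


/-- An arithmetic circuit over variables `ι` with values `α`: leaves are indicator
variables `λ_{i,v}` or real parameters; internal nodes are sums or products. -/
inductive AC (ι α : Type) : Type where
  | ind (i : ι) (v : α)
  | param (θ : ℝ)
  | sum (l r : AC ι α)
  | prod (l r : AC ι α)

namespace AC

variable {ι α : Type} [Fintype ι] [DecidableEq ι] [Fintype α] [DecidableEq α]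

/-- Evaluate the circuit under a circuit input `Λ` assigning 0/1 to each indicator. -/
def eval (Λ : ι → α → Bool) : AC ι α → ℝ
  | ind i v => if Λ i v then 1 else 0
  | param θ => θ
  | sum l r => l.eval Λ + r.eval Λ
  | prod l r => l.eval Λ * r.eval Λ

/-- Evaluate the maximizer circuit (sum nodes replaced by max nodes). -/
def evalMax (Λ : ι → α → Bool) : AC ι α → ℝ
  | ind i v => if Λ i v then 1 else 0
  | param θ => θ
  | sum l r => max (l.evalMax Λ) (r.evalMax Λ)
  | prod l r => l.evalMax Λ * r.evalMax Λ

/-- The circuit input corresponding to a full instantiation `x`. -/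
def inputOf (x : ι → α) : ι → α → Bool := fun i v => decide (x i = v)

/-- The circuit input corresponding to a partial instantiation `y`:
an indicator is set to 1 iff its value is compatible with `y`. -/
def pinputOf (y : ι → Option α) : ι → α → Bool := fun i v =>
  match y i with
  | none => true
  | some w => decide (w = v)

/-- The value `AC(x)` of the circuit at a full instantiation `x`. -/
def evalAt (x : ι → α) (c : AC ι α) : ℝ := c.eval (inputOf x)

/-- The value `AC(y)` of the circuit at a partial instantiation `y`. -/
def evalP (y : ι → Option α) (c : AC ι α) : ℝ := c.eval (pinputOf y)

/-- Maximizer-circuit value at a full instantiation. -/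
def evalMaxAt (x : ι → α) (c : AC ι α) : ℝ := c.evalMax (inputOf x)

/-- Maximizer-circuit value at a partial instantiation. -/
def evalMaxP (y : ι → Option α) (c : AC ι α) : ℝ := c.evalMax (pinputOf y)

/-- `vars n`: variables with some indicator at or under the node. -/
def vars : AC ι α → Finset ι
  | ind i _ => {i}
  | param _ => ∅
  | sum l r => l.vars ∪ r.vars
  | prod l r => l.vars ∪ r.vars

/-- The multiset of parameters appearing in the circuit. -/
def params : AC ι α → Multiset ℝ
  | ind _ _ => 0
  | param θ => {θ}
  | sum l r => l.params + r.params
  | prod l r => l.params + r.params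

/-- Decomposability: children of every `*`-node have disjoint variable sets. -/
def Decomposable : AC ι α → Prop
  | ind _ _ => True
  | param _ => True
  | sum l r => l.Decomposable ∧ r.Decomposable
  | prod l r => Disjoint l.vars r.vars ∧ l.Decomposable ∧ r.Decomposable

/-- Smoothness: every child of a `+`-node mentions the same variables as the node. -/
def Smooth : AC ι α → Prop
  | ind _ _ => True
  | param _ => True
  | sum l r => l.vars = r.vars ∧ l.Smooth ∧ r.Smooth
  | prod l r => l.Smooth ∧ r.Smooth

/-- Determinism: under every full instantiation, every `+`-node has at most one
non-zero input. -/
def Deterministic : AC ι α → Prop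
  | ind _ _ => True
  | param _ => True
  | sum l r => (∀ x : ι → α, l.evalAt x = 0 ∨ r.evalAt x = 0) ∧
      l.Deterministic ∧ r.Deterministic
  | prod l r => l.Deterministic ∧ r.Deterministic

/-- A full instantiation `x` is compatible with a partial instantiation `y`. -/
def Compat (x : ι → α) (y : ι → Option α) : Prop :=
  ∀ i, y i = none ∨ y i = some (x i)

instance (x : ι → α) (y : ι → Option α) : Decidable (Compat x y) := by
  unfold Compat; infer_instance

/-- The graph of a full instantiation, i.e. its term `{(i, x i) | i}`. -/
def graphOf (x : ι → α) : Finset (ι × α) := Finset.univ.image fun i => (i, x i)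

/-- The marginal `Σ_{x ∼ y} f(x)` of a factor `f` at a partial instantiation `y`. -/
def margSum (f : (ι → α) → ℝ) (y : ι → Option α) : ℝ :=
  ∑ x : ι → α, if Compat x y then f x else 0

/-- The circuit computes the factor `f`. -/
def Computes (c : AC ι α) (f : (ι → α) → ℝ) : Prop := ∀ x, c.evalAt x = f x

/-- The circuit computes the marginals of the factor `f`. -/
def ComputesMarginals (c : AC ι α) (f : (ι → α) → ℝ) : Prop :=
  ∀ y : ι → Option α, c.evalP y = margSum f y

/-- The multiset of (term, coefficient) pairs of all complete subcircuits. -/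
def subs : AC ι α → Multiset (Finset (ι × α) × ℝ)
  | ind i v => {({(i, v)}, 1)}
  | param θ => {(∅, θ)}
  | sum l r => l.subs + r.subs
  | prod l r => l.subs.bind fun a => r.subs.map fun b => (a.1 ∪ b.1, a.2 * b.2)

/-- Complete subcircuits of a circuit: choose one child of each `+`-node and all
children of each `*`-node. -/
inductive Sub : AC ι α → Type where
  | ind (i : ι) (v : α) : Sub (AC.ind i v)
  | param (θ : ℝ) : Sub (AC.param θ)
  | sumL {l r : AC ι α} : Sub l → Sub (AC.sum l r)
  | sumR {l r : AC ι α} : Sub r → Sub (AC.sum l r)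
  | prod {l r : AC ι α} : Sub l → Sub r → Sub (AC.prod l r)

/-- The term of a complete subcircuit: the set of indicator values appearing in it. -/
def Sub.term : {c : AC ι α} → Sub c → Finset (ι × α)
  | _, .ind i v => {(i, v)}
  | _, .param _ => ∅
  | _, .sumL s => s.term
  | _, .sumR s => s.term
  | _, .prod s t => s.term ∪ t.term

/-- The coefficient of a complete subcircuit: the product of its parameters. -/
def Sub.coeff : {c : AC ι α} → Sub c → ℝ
  | _, .ind _ _ => 1
  | _, .param θ => θ
  | _, .sumL s => s.coeff
  | _, .sumR s => s.coeff
  | _, .prod s t => s.coeff * t.coeff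


end AC



lemma AC.Sub.term_mem_vars {ι α : Type} [Fintype ι] [DecidableEq ι] [Fintype α] [DecidableEq α] :
    ∀ {c : AC ι α} (s : AC.Sub c) (p : ι × α), p ∈ s.term → p.1 ∈ c.vars
  | _, .ind i v, p, hp => by
      simp [AC.Sub.term] at hp; subst hp; simp [AC.vars]
  | _, .param θ, p, hp => by simp [AC.Sub.term] at hp
  | _, .sumL s, p, hp => Finset.mem_union_left _ (term_mem_vars s p hp)
  | _, .sumR s, p, hp => Finset.mem_union_right _ (term_mem_vars s p hp)
  | _, .prod s t, p, hp => by
      simp only [AC.Sub.term, Finset.mem_union] at hp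
      rcases hp with h | h
      · exact Finset.mem_union_left _ (term_mem_vars s p h)
      · exact Finset.mem_union_right _ (term_mem_vars t p h)

/-- In a decomposable (and smooth) circuit, the complete subcircuits rooted at a
`*`-node correspond bijectively to tuples of complete subcircuits of its children;
the combined term is the disjoint union of the children's terms and the combined
coefficient is the product of the children's coefficients. -/
theorem stmt15 {ι α : Type} [Fintype ι] [DecidableEq ι] [Fintype α] [DecidableEq α]
    (l r : AC ι α) (hd : (AC.prod l r).Decomposable) (hs : (AC.prod l r).Smooth) :
    ∃ e : AC.Sub (AC.prod l r) ≃ AC.Sub l × AC.Sub r,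
      ∀ s : AC.Sub (AC.prod l r),
        s.term = (e s).1.term ∪ (e s).2.term ∧
        Disjoint (e s).1.term (e s).2.term ∧
        s.coeff = (e s).1.coeff * (e s).2.coeff := by
  refine ⟨⟨fun s => match s with | .prod a b => (a, b),
    fun p => .prod p.1 p.2,
    fun s => by cases s; rfl, fun p => rfl⟩, ?_⟩
  intro s
  cases s with
  | prod a b =>
    refine ⟨rfl, ?_, rfl⟩
    rw [Finset.disjoint_left]
    intro p hpa hpb
    exact Finset.disjoint_left.mp hd.1 (AC.Sub.term_mem_vars a p hpa)
      (AC.Sub.term_mem_vars b p hpb)
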